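/- arXiv:1801.07699 — 3 statements merged into one kernel-verified Lean document; each statement's English description precedes it below -/
import Mathlib

section
/- Let E be a random closed subset of the unit circle ∂𝔻 such that there exist constants C > 0 and β ∈ (0,1) with ℙ[E ∩ I ≠ ∅] ≤ C·|I|^β for every arc I ⊆ ∂𝔻. Then for any fixed subset A ⊆ ∂𝔻 with dim_H(A) ≥ β, almost surely dim_H(A ∩ E) ≤ dim_H(A) − β. -/
open MeasureTheory Set Real Filter
open scoped ENNReal NNReal Topology


lemma chord_lower {ψ : ℝ} (h : |ψ| ≤ π) :
    2 / π * |ψ| ≤ ‖Complex.exp (ψ * Complex.I) - 1‖ := by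
  have hsin0 : 0 ≤ Real.sin (|ψ| / 2) := by
    apply Real.sin_nonneg_of_nonneg_of_le_pi
    · positivity
    · linarith [pi_pos]
  have habs : ‖Complex.exp (ψ * Complex.I) - 1‖ = 2 * Real.sin (|ψ| / 2) := by
    rw [Complex.norm_def, Complex.normSq_apply]
    have hre : (Complex.exp (ψ * Complex.I) - 1).re = Real.cos ψ - 1 := by
      simp [Complex.exp_ofReal_mul_I_re]
    have him : (Complex.exp (ψ * Complex.I) - 1).im = Real.sin ψ := by
      simp [Complex.exp_ofReal_mul_I_im]
    rw [hre, him]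
    have hcos : Real.cos ψ = 1 - 2 * Real.sin (ψ / 2) ^ 2 := by
      have h1 : Real.cos (2 * (ψ/2)) = 2 * Real.cos (ψ/2) ^ 2 - 1 := Real.cos_two_mul _
      have h2 := Real.sin_sq_add_cos_sq (ψ / 2)
      rw [show 2 * (ψ/2) = ψ by ring] at h1
      nlinarith
    have hsin : Real.sin (|ψ| / 2) = |Real.sin (ψ / 2)| := by
      rcases abs_cases ψ with ⟨h1, _⟩ | ⟨h1, h2⟩
      · rw [h1, abs_of_nonneg]
        apply Real.sin_nonneg_of_nonneg_of_le_pi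
        · linarith
        · linarith [pi_pos, le_abs_self ψ, h1 ▸ h]
      · rw [h1, neg_div, Real.sin_neg, abs_of_nonpos (by
          apply Real.sin_nonpos_of_nonpos_of_neg_pi_le <;> nlinarith [neg_abs_le ψ, h1 ▸ h])]
    have key : (Real.cos ψ - 1) * (Real.cos ψ - 1) + Real.sin ψ * Real.sin ψ
        = (2 * Real.sin (|ψ|/2)) ^ 2 := by
      have h2 := Real.sin_sq_add_cos_sq ψ
      rw [hsin]
      have h3 : |Real.sin (ψ/2)| ^ 2 = Real.sin (ψ/2) ^ 2 := sq_abs _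
      nlinarith
    rw [key, Real.sqrt_sq (by positivity)]
  rw [habs]
  have h1 : |ψ| / 2 ≤ π / 2 := by linarith
  have h2 := Real.mul_le_sin (show (0:ℝ) ≤ |ψ|/2 by positivity) h1
  nlinarith

lemma arc_cover {S : Set ℂ} (hS : S ⊆ Metric.sphere (0:ℂ) 1) (hb : EMetric.diam S ≠ ⊤)
    {x : ℂ} (hx : x ∈ S) :
    S ⊆ (fun θ : ℝ => Complex.exp (θ * Complex.I)) ''
      Set.Icc (Complex.arg x - π / 2 * Metric.diam S) (Complex.arg x + π / 2 * Metric.diam S) := by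
  have hbd : Bornology.IsBounded S := Metric.isBounded_iff_ediam_ne_top.2 hb
  have hax : ‖x‖ = 1 := by simpa using hS hx
  have hx0 : x ≠ 0 := by intro h; rw [h] at hax; simp at hax
  intro y hy
  have hay : ‖y‖ = 1 := by simpa using hS hy
  set z := y / x with hz
  have haz : ‖z‖ = 1 := by
    rw [hz, norm_div, hax, hay]; norm_num
  set ψ := Complex.arg z with hψ
  have hzexp : Complex.exp (ψ * Complex.I) = z := by
    have := Complex.norm_mul_exp_arg_mul_I z
    rwa [haz, Complex.ofReal_one, one_mul] at this
  have hxexp : Complex.exp ((Complex.arg x : ℝ) * Complex.I) = x := by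
    have := Complex.norm_mul_exp_arg_mul_I x
    rwa [hax, Complex.ofReal_one, one_mul] at this
  have hψπ : |ψ| ≤ π := Complex.abs_arg_le_pi z
  have hchord : 2 / π * |ψ| ≤ ‖z - 1‖ := by
    rw [← hzexp]; exact chord_lower hψπ
  have hz1 : ‖z - 1‖ = dist y x := by
    rw [hz, Complex.dist_eq]
    rw [show y / x - 1 = (y - x) / x by field_simp]
    rw [norm_div, hax, div_one]
  have hdist : dist y x ≤ Metric.diam S := Metric.dist_le_diam_of_mem hbd hy hx
  have hψle : |ψ| ≤ π / 2 * Metric.diam S := by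
    have hπ := pi_pos
    rw [hz1] at hchord
    have : 2 / π * |ψ| ≤ Metric.diam S := hchord.trans hdist
    calc |ψ| = π / 2 * (2 / π * |ψ|) := by field_simp
    _ ≤ π / 2 * Metric.diam S := by
      apply mul_le_mul_of_nonneg_left this (by positivity)
  refine ⟨Complex.arg x + ψ, ?_, ?_⟩
  · constructor <;> [linarith [abs_le.1 hψle |>.1]; linarith [abs_le.1 hψle |>.2]]
  · show Complex.exp (((Complex.arg x + ψ : ℝ) : ℂ) * Complex.I) = y
    rw [Complex.ofReal_add, add_mul, Complex.exp_add, hxexp, hzexp, hz]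
    field_simp

lemma hit_bound {Ω : Type*} [MeasurableSpace Ω] (μ : Measure Ω)
    (E : Ω → Set ℂ) (C β : ℝ) (hC : 0 < C) (hβ : 0 < β)
    (harc : ∀ a b : ℝ, a ≤ b →
      μ {ω | (E ω ∩ (fun θ : ℝ => Complex.exp (θ * Complex.I)) '' Set.Icc a b).Nonempty}
        ≤ ENNReal.ofReal (C * (b - a) ^ β))
    (A : Set ℂ) (hA : A ⊆ Metric.sphere (0:ℂ) 1) (t : Set ℂ) (ht : EMetric.diam t ≠ ⊤) :
    μ {ω | (E ω ∩ (A ∩ t)).Nonempty}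
      ≤ ENNReal.ofReal C * ENNReal.ofReal π ^ β * EMetric.diam t ^ β := by
  rcases (A ∩ t).eq_empty_or_nonempty with h | ⟨x, hx⟩
  · simp [h]
  have hS : A ∩ t ⊆ Metric.sphere (0:ℂ) 1 := fun y hy => hA hy.1
  have hsub : EMetric.diam (A ∩ t) ≤ EMetric.diam t := EMetric.diam_mono inter_subset_right
  have hb : EMetric.diam (A ∩ t) ≠ ⊤ := fun h' => ht (top_le_iff.1 (h' ▸ hsub))
  set D := Metric.diam (A ∩ t) with hD
  have hD0 : 0 ≤ D := Metric.diam_nonneg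
  have hπ := pi_pos
  have hab : Complex.arg x - π / 2 * D ≤ Complex.arg x + π / 2 * D := by nlinarith
  have hcov := arc_cover hS hb hx
  have hev : {ω | (E ω ∩ (A ∩ t)).Nonempty} ⊆
      {ω | (E ω ∩ (fun θ : ℝ => Complex.exp (θ * Complex.I)) ''
        Set.Icc (Complex.arg x - π / 2 * D) (Complex.arg x + π / 2 * D)).Nonempty} := by
    intro ω ⟨y, hy1, hy2⟩
    exact ⟨y, hy1, hcov hy2⟩
  calc μ {ω | (E ω ∩ (A ∩ t)).Nonempty} ≤ _ := measure_mono hev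
  _ ≤ ENNReal.ofReal (C * ((Complex.arg x + π / 2 * D) - (Complex.arg x - π / 2 * D)) ^ β) :=
      harc _ _ hab
  _ = ENNReal.ofReal (C * (π * D) ^ β) := by ring_nf
  _ = ENNReal.ofReal C * ENNReal.ofReal ((π * D) ^ β) := ENNReal.ofReal_mul hC.le
  _ = ENNReal.ofReal C * ENNReal.ofReal (π * D) ^ β := by
      rw [ENNReal.ofReal_rpow_of_nonneg (by positivity) hβ.le]
  _ = ENNReal.ofReal C * (ENNReal.ofReal π * ENNReal.ofReal D) ^ β := by
      rw [ENNReal.ofReal_mul hπ.le]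
  _ = ENNReal.ofReal C * (ENNReal.ofReal π ^ β * ENNReal.ofReal D ^ β) := by
      rw [ENNReal.mul_rpow_of_nonneg _ _ hβ.le]
  _ ≤ ENNReal.ofReal C * (ENNReal.ofReal π ^ β * EMetric.diam t ^ β) := by
      have hDle : ENNReal.ofReal D ≤ EMetric.diam t := by
        rw [hD, Metric.diam, ENNReal.ofReal_toReal (show Metric.ediam (A ∩ t) ≠ ⊤ from hb)]; exact hsub
      exact mul_le_mul_right (mul_le_mul_right (ENNReal.rpow_le_rpow hDle hβ.le) _) _
  _ = ENNReal.ofReal C * ENNReal.ofReal π ^ β * EMetric.diam t ^ β := by ring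

lemma core {Ω : Type*} [MeasurableSpace Ω] (μ : Measure Ω) [IsProbabilityMeasure μ]
    (E : Ω → Set ℂ) (C β : ℝ) (hC : 0 < C) (hβ : 0 < β)
    (harc : ∀ a b : ℝ, a ≤ b →
      μ {ω | (E ω ∩ (fun θ : ℝ => Complex.exp (θ * Complex.I)) '' Set.Icc a b).Nonempty}
        ≤ ENNReal.ofReal (C * (b - a) ^ β))
    (A : Set ℂ) (hA : A ⊆ Metric.sphere (0:ℂ) 1)
    (q : ℝ) (hq : 0 < q) (hA0 : μH[q + β] A = 0) :
    ∀ᵐ ω ∂μ, μH[q] (A ∩ E ω) = 0 := by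
  classical
  set r : ℕ → ℝ≥0∞ := fun m => ((m : ℝ≥0∞) + 1)⁻¹ with hr_def
  have hr_pos : ∀ m, 0 < r m := fun m => ENNReal.inv_pos.2 (by simp)
  have hr_ne_top : ∀ m, r m ≠ ⊤ := fun m => by
    simp [hr_def, ENNReal.inv_ne_top]
  have hr0 : Tendsto r atTop (𝓝 0) := by
    have h1 : Tendsto (fun m : ℕ => ((m + 1 : ℕ) : ℝ≥0∞)⁻¹) atTop (𝓝 0) :=
      ENNReal.tendsto_inv_nat_nhds_zero.comp (tendsto_add_atTop_nat 1)
    convert h1 using 2 with m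
    push_cast; ring
  -- extract covers
  have hcovers : ∀ m : ℕ, ∃ t : ℕ → Set ℂ, ∃ _ : A ⊆ ⋃ n, t n,
      ∃ _ : ∀ n, EMetric.diam (t n) ≤ r m,
      (∑' n, ⨆ _ : (t n).Nonempty, EMetric.diam (t n) ^ (q + β)) < r m := by
    intro m
    rw [MeasureTheory.Measure.hausdorffMeasure_apply] at hA0
    simp only [ENNReal.iSup_eq_zero] at hA0
    have h0 := hA0 (r m) (hr_pos m)
    have hlt : (⨅ (t : ℕ → Set ℂ) (_ : A ⊆ ⋃ n, t n)
        (_ : ∀ n, EMetric.diam (t n) ≤ r m),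
          ∑' n, ⨆ _ : (t n).Nonempty, EMetric.diam (t n) ^ (q + β)) < r m := by
      exact lt_of_eq_of_lt h0 (hr_pos m)
    simpa only [iInf_lt_iff] using hlt
  choose t ht_cov ht_diam ht_sum using hcovers
  have ht_ne_top : ∀ m n, EMetric.diam (t m n) ≠ ⊤ :=
    fun m n => fun h => hr_ne_top m (top_le_iff.1 (h ▸ ht_diam m n))
  -- events and measurable hulls
  set S : ℕ → ℕ → Set Ω := fun m n => {ω | (E ω ∩ (A ∩ t m n)).Nonempty} with hS_def
  set T : ℕ → ℕ → Set Ω := fun m n => toMeasurable μ (S m n) with hT_def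
  set K : ℝ≥0∞ := ENNReal.ofReal C * ENNReal.ofReal π ^ β with hK_def
  have hK_ne_top : K ≠ ⊤ := by
    apply ENNReal.mul_ne_top ENNReal.ofReal_ne_top
    exact (ENNReal.rpow_ne_top_of_nonneg hβ.le ENNReal.ofReal_ne_top)
  set Y : ℕ → Ω → ℝ≥0∞ := fun m ω =>
    ∑' n, (T m n).indicator (fun _ => EMetric.diam (t m n) ^ q) ω with hY_def
  have hYmeas : ∀ m, Measurable (Y m) := fun m =>
    Measurable.ennreal_tsum fun n =>
      measurable_const.indicator (measurableSet_toMeasurable _ _)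
  -- integral bound
  have hint : ∀ m, ∫⁻ ω, Y m ω ∂μ ≤ K * r m := by
    intro m
    rw [hY_def]
    rw [lintegral_tsum fun n =>
      (measurable_const.indicator (measurableSet_toMeasurable _ _)).aemeasurable]
    have hterm : ∀ n, ∫⁻ ω, (T m n).indicator (fun _ => EMetric.diam (t m n) ^ q) ω ∂μ
        ≤ K * ⨆ _ : (t m n).Nonempty, EMetric.diam (t m n) ^ (q + β) := by
      intro n
      rw [lintegral_indicator_const (measurableSet_toMeasurable _ _),
        measure_toMeasurable]
      rcases (t m n).eq_empty_or_nonempty with he | hne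
      · have : S m n = ∅ := by
          simp [hS_def, he]
        rw [this]
        simp
      · rw [iSup_pos hne]
        rcases eq_or_ne (EMetric.diam (t m n)) 0 with h0 | h0
        · rw [h0, ENNReal.zero_rpow_of_pos hq]
          simp
        · calc EMetric.diam (t m n) ^ q * μ (S m n)
              ≤ EMetric.diam (t m n) ^ q * (K * EMetric.diam (t m n) ^ β) := by
                apply mul_le_mul_right
                exact hit_bound μ E C β hC hβ harc A hA _ (ht_ne_top m n)
          _ = K * (EMetric.diam (t m n) ^ q * EMetric.diam (t m n) ^ β) := by ring
          _ = K * EMetric.diam (t m n) ^ (q + β) := by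
                rw [← ENNReal.rpow_add _ _ h0 (ht_ne_top m n)]
    calc ∑' n, ∫⁻ ω, (T m n).indicator (fun _ => EMetric.diam (t m n) ^ q) ω ∂μ
        ≤ ∑' n, K * ⨆ _ : (t m n).Nonempty, EMetric.diam (t m n) ^ (q + β) :=
          ENNReal.tsum_le_tsum hterm
    _ = K * ∑' n, ⨆ _ : (t m n).Nonempty, EMetric.diam (t m n) ^ (q + β) :=
          ENNReal.tsum_mul_left
    _ ≤ K * r m := mul_le_mul_right (ht_sum m).le _
  -- Fatou
  have hlim : ∫⁻ ω, liminf (fun m => Y m ω) atTop ∂μ = 0 := by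
    have h1 : ∫⁻ ω, liminf (fun m => Y m ω) atTop ∂μ
        ≤ liminf (fun m => ∫⁻ ω, Y m ω ∂μ) atTop :=
      lintegral_liminf_le hYmeas
    have h2 : liminf (fun m => ∫⁻ ω, Y m ω ∂μ) atTop ≤
        liminf (fun m => K * r m) atTop :=
      liminf_le_liminf (Eventually.of_forall hint)
    have h3 : Tendsto (fun m => K * r m) atTop (𝓝 0) := by
      have := ENNReal.Tendsto.const_mul hr0 (Or.inr hK_ne_top)
      simpa using this
    rw [h3.liminf_eq] at h2
    exact le_antisymm (h1.trans h2) zero_le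
  have hae : ∀ᵐ ω ∂μ, liminf (fun m => Y m ω) atTop = 0 :=
    (lintegral_eq_zero_iff (Measurable.liminf hYmeas)).1 hlim
  -- pointwise bound
  have hpt : ∀ ω, μH[q] (A ∩ E ω) ≤ liminf (fun m => Y m ω) atTop := by
    intro ω
    set u : ℕ → ℕ → Set ℂ := fun m n =>
      if (E ω ∩ (A ∩ t m n)).Nonempty then t m n else ∅ with hu_def
    have h1 : μH[q] (A ∩ E ω) ≤ liminf (fun m => ∑' n, EMetric.diam (u m n) ^ q) atTop := by
      apply MeasureTheory.Measure.hausdorffMeasure_le_liminf_tsum q (A ∩ E ω) r hr0 u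
      · filter_upwards with m n
        simp only [hu_def]
        split_ifs with h
        · exact ht_diam m n
        · simp [hr_pos m |>.le]
      · filter_upwards with m
        intro x hx
        obtain ⟨n, hn⟩ := mem_iUnion.1 (ht_cov m hx.1)
        refine mem_iUnion.2 ⟨n, ?_⟩
        simp only [hu_def]
        have hne : (E ω ∩ (A ∩ t m n)).Nonempty := ⟨x, hx.2, hx.1, hn⟩
        rw [if_pos hne]
        exact hn
    refine h1.trans (liminf_le_liminf (Eventually.of_forall fun m => ?_))
    apply ENNReal.tsum_le_tsum
    intro n
    simp only [hu_def]
    split_ifs with h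
    · have hωT : ω ∈ T m n := subset_toMeasurable μ _ h
      simp [indicator_of_mem hωT]
    · rw [show EMetric.diam (∅ : Set ℂ) = 0 from EMetric.diam_empty, ENNReal.zero_rpow_of_pos hq]
      exact zero_le
  filter_upwards [hae] with ω hω
  exact le_antisymm ((hpt ω).trans hω.le) zero_le

/-- Dimension-drop lemma: for a random subset of the unit circle whose probability of
hitting any arc is bounded by `C * (arc length)^β`, intersecting it with a fixed set `A`
with `dimH A ≥ β` drops the Hausdorff dimension by at least `β`, almost surely. -/
theorem random_set_intersection_dimension_drop
    {Ω : Type*} [MeasurableSpace Ω] (μ : Measure Ω) [IsProbabilityMeasure μ]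
    (E : Ω → Set ℂ) (hE : ∀ ω, E ω ⊆ Metric.sphere (0:ℂ) 1)
    (C β : ℝ) (hC : 0 < C) (hβ : β ∈ Set.Ioo (0:ℝ) 1)
    (harc : ∀ a b : ℝ, a ≤ b →
      μ {ω | (E ω ∩ (fun θ : ℝ => Complex.exp (θ * Complex.I)) '' Set.Icc a b).Nonempty}
        ≤ ENNReal.ofReal (C * (b - a) ^ β))
    (A : Set ℂ) (hA : A ⊆ Metric.sphere (0:ℂ) 1)
    (hdim : ENNReal.ofReal β ≤ dimH A) :
    ∀ᵐ ω ∂μ, dimH (A ∩ E ω) ≤ dimH A - ENNReal.ofReal β := by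
  obtain ⟨hβ0, hβ1⟩ := hβ
  have hdA_top : dimH A ≠ ⊤ := by
    have h1 : dimH A ≤ dimH (univ : Set ℂ) := dimH_mono (subset_univ A)
    rw [dimH_univ_eq_finrank ℂ] at h1
    exact fun h => by simp [h] at h1
  set d := (dimH A).toReal with hd_def
  have hd0 : 0 ≤ d := ENNReal.toReal_nonneg
  have hofd : ENNReal.ofReal d = dimH A := ENNReal.ofReal_toReal hdA_top
  have hβd : β ≤ d := by
    have h1 := ENNReal.toReal_mono hdA_top hdim
    rwa [ENNReal.toReal_ofReal hβ0.le] at h1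
  have key : ∀ n : ℕ, ∀ᵐ ω ∂μ,
      dimH (A ∩ E ω) ≤ ENNReal.ofReal (d - β + 1 / (n + 1)) := by
    intro n
    have hn1 : (0:ℝ) < 1 / (n + 1) := by positivity
    set q : ℝ := d - β + 1 / (n + 1) with hq_def
    have hq : 0 < q := by rw [hq_def]; linarith
    have hA0 : μH[q + β] A = 0 := by
      have hlt : dimH A < ENNReal.ofReal (q + β) := by
        rw [show q + β = d + 1 / (n + 1) by rw [hq_def]; ring,
          ENNReal.ofReal_add hd0 hn1.le, hofd]
        exact ENNReal.lt_add_right hdA_top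
          (ne_of_gt (ENNReal.ofReal_pos.2 hn1))
      have hqβ : (0:ℝ) ≤ q + β := by linarith
      have := hausdorffMeasure_of_dimH_lt (d := (⟨q + β, hqβ⟩ : ℝ≥0))
        (by rw [ENNReal.ofReal_eq_coe_nnreal hqβ] at hlt; exact hlt)
      exact this
    filter_upwards [core μ E C β hC hβ0 harc A hA q hq hA0] with ω hω
    have := dimH_le_of_hausdorffMeasure_ne_top (s := A ∩ E ω) (d := (⟨q, hq.le⟩ : ℝ≥0))
      (by show μH[q] (A ∩ E ω) ≠ ⊤; rw [hω]; exact ENNReal.zero_ne_top)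
    rw [ENNReal.ofReal_eq_coe_nnreal hq.le]; exact this
  have hall := ae_all_iff.2 key
  filter_upwards [hall] with ω hω
  have hsub : ENNReal.ofReal (d - β) = dimH A - ENNReal.ofReal β := by
    rw [ENNReal.ofReal_sub _ hβ0.le, hofd]
  refine ENNReal.le_of_forall_pos_le_add fun ε hε hfin => ?_
  obtain ⟨n, hn⟩ := exists_nat_one_div_lt (show (0:ℝ) < ε by exact_mod_cast hε)
  calc dimH (A ∩ E ω) ≤ ENNReal.ofReal (d - β + 1 / (n + 1)) := hω n
  _ = ENNReal.ofReal (d - β) + ENNReal.ofReal (1 / (n + 1)) :=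
      ENNReal.ofReal_add (by linarith) (by positivity)
  _ ≤ (dimH A - ENNReal.ofReal β) + ε := by
      rw [hsub]
      refine add_le_add_right ?_ _
      rw [← ENNReal.ofReal_coe_nnreal]
      exact ENNReal.ofReal_le_ofReal hn.le
end

section
/- Let μ and ν be probability measures on a measurable space, A a measurable set with μ(A) = p, and suppose ν ≪ μ with density R = dν/dμ satisfying R ≥ ε·𝟙_A μ-almost everywhere, for some ε ∈ (0,1]. Then there exists a coupling (X, Y) of μ and ν (i.e., a probability measure on the product with marginals μ and ν) such that ℙ[X = Y ∈ A] ≥ p·ε. -/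
open MeasureTheory
open scoped ENNReal

/-- If `ν ≪ μ` with density `R ≥ ε · 𝟙_A` μ-a.e. and `μ(A) = p`, then there is a coupling
of `μ` and `ν` under which the two coordinates agree and lie in `A` with probability
at least `p · ε`. -/
theorem coupling_of_density_lower_bound
    {α : Type*} [MeasurableSpace α] [StandardBorelSpace α] [Nonempty α]
    (μ ν : Measure α) [IsProbabilityMeasure μ] [IsProbabilityMeasure ν]
    (A : Set α) (hA : MeasurableSet A)
    (p : ℝ) (hp : μ A = ENNReal.ofReal p)
    (ε : ℝ) (hε : ε ∈ Set.Ioc (0:ℝ) 1)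
    (hac : ν ≪ μ)
    (hR : ∀ᵐ x ∂μ, ENNReal.ofReal (ε * A.indicator (fun _ => (1:ℝ)) x) ≤ ν.rnDeriv μ x) :
    ∃ π : Measure (α × α), IsProbabilityMeasure π ∧
      π.map Prod.fst = μ ∧ π.map Prod.snd = ν ∧
      ENNReal.ofReal (p * ε) ≤ π {z : α × α | z.1 = z.2 ∧ z.1 ∈ A} := by
  obtain ⟨hε0, hε1⟩ := hε
  -- the target set is measurable
  have hS : MeasurableSet {z : α × α | z.1 = z.2 ∧ z.1 ∈ A} := by
    letI := upgradeStandardBorel α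
    have h1 : MeasurableSet {z : α × α | z.1 = z.2} := by
      have : {z : α × α | z.1 = z.2} = Set.diagonal α := by ext z; simp [Set.diagonal, eq_comm]
      rw [this]
      exact isClosed_diagonal.measurableSet
    exact h1.inter (measurable_fst hA)
  rcases le_or_gt p 0 with hp0 | hp0
  · refine ⟨μ.prod ν, by infer_instance, by simp, by simp, ?_⟩
    have : p * ε ≤ 0 := mul_nonpos_of_nonpos_of_nonneg hp0 hε0.le
    simp [ENNReal.ofReal_eq_zero.mpr this]
  -- main case
  set ε' : ENNReal := ENNReal.ofReal ε with hε'
  set σ : Measure α := ε' • μ.restrict A with hσ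
  have hε'le : ε' ≤ 1 := by
    rw [hε', ← ENNReal.ofReal_one]; exact ENNReal.ofReal_le_ofReal hε1
  have hσμ : σ ≤ μ := by
    intro s
    simp only [hσ, Measure.smul_apply, smul_eq_mul]
    calc ε' * μ.restrict A s ≤ 1 * μ.restrict A s := by gcongr
    _ = μ.restrict A s := one_mul _
    _ ≤ μ s := Measure.restrict_le_self s
  have hσwd : σ = μ.withDensity (A.indicator fun _ => ε') := by
    rw [withDensity_indicator hA, withDensity_const]
  have hσν : σ ≤ ν := by
    rw [hσwd]
    conv_rhs => rw [← Measure.withDensity_rnDeriv_eq ν μ hac]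
    refine withDensity_mono ?_
    filter_upwards [hR] with x hx
    refine le_trans ?_ hx
    by_cases hxA : x ∈ A <;> simp [Set.indicator_of_mem, Set.indicator_of_notMem, hxA, le_refl, hε']
  have hσA : σ A = ENNReal.ofReal (p * ε) := by
    rw [hσ]
    simp only [Measure.smul_apply, Measure.restrict_apply_self, smul_eq_mul, hp]
    rw [← ENNReal.ofReal_mul hε0.le, mul_comm]
  -- remainders
  set μ' : Measure α := μ - σ with hμ'
  set ν' : Measure α := ν - σ with hν'
  haveI : IsFiniteMeasure σ := isFiniteMeasure_of_le μ hσμ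
  haveI : IsFiniteMeasure μ' := Measure.isFiniteMeasure_sub
  haveI : IsFiniteMeasure ν' := Measure.isFiniteMeasure_sub
  set t : ℝ≥0∞ := μ' Set.univ with ht
  have htν : ν' Set.univ = t := by
    rw [ht, hμ', hν', Measure.sub_apply MeasurableSet.univ hσμ,
      Measure.sub_apply MeasurableSet.univ hσν]
    simp
  have hμ'add : μ' + σ = μ := by
    rw [hμ']; exact Measure.sub_add_cancel_of_le hσμ
  have hν'add : ν' + σ = ν := by
    rw [hν']; exact Measure.sub_add_cancel_of_le hσν
  clear_value σ μ' ν'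
  have hdmeas : Measurable (fun x : α => (x, x)) := measurable_id.prodMk measurable_id
  set π : Measure (α × α) := σ.map (fun x => (x, x)) + t⁻¹ • (μ'.prod ν') with hπ
  have hsmul : ∀ m : Measure α, t⁻¹ • (t • m) = m ∨ t = 0 := by
    intro m
    rcases eq_or_ne t 0 with h | h
    · exact Or.inr h
    · left
      rw [smul_smul, ENNReal.inv_mul_cancel h (by
        have : t ≤ μ Set.univ := by
          rw [ht, hμ', Measure.sub_apply MeasurableSet.univ hσμ]
          exact tsub_le_self
        exact ne_top_of_le_ne_top (measure_ne_top μ _) this), one_smul]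
  have hμ'zero : t = 0 → μ' = 0 := fun h => Measure.measure_univ_eq_zero.mp (by rw [← ht, h])
  have hν'zero : t = 0 → ν' = 0 := fun h => Measure.measure_univ_eq_zero.mp (by rw [htν, h])
  have hfst : π.map Prod.fst = μ := by
    rw [hπ, Measure.map_add _ _ measurable_fst, Measure.map_smul,
      Measure.map_map measurable_fst hdmeas]
    simp only [Function.comp_def]
    rw [Measure.map_id', Measure.map_fst_prod, htν]
    rcases hsmul μ' with h | h
    · rw [h, add_comm]; exact hμ'add
    · rw [hμ'zero h] at hμ'add ⊢
      simpa using hμ'add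
  have hsnd : π.map Prod.snd = ν := by
    rw [hπ, Measure.map_add _ _ measurable_snd, Measure.map_smul,
      Measure.map_map measurable_snd hdmeas]
    simp only [Function.comp_def]
    rw [Measure.map_id', Measure.map_snd_prod, ← ht]
    rcases hsmul ν' with h | h
    · rw [h, add_comm]; exact hν'add
    · rw [hν'zero h] at hν'add ⊢
      simpa using hν'add
  refine ⟨π, ?_, hfst, hsnd, ?_⟩
  · constructor
    have : π Set.univ = (π.map Prod.fst) Set.univ := by
      rw [Measure.map_apply measurable_fst MeasurableSet.univ]; simp
    rw [this, hfst]; exact measure_univ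
  · calc ENNReal.ofReal (p * ε) = σ A := hσA.symm
    _ = σ.map (fun x => (x, x)) {z : α × α | z.1 = z.2 ∧ z.1 ∈ A} := by
        rw [Measure.map_apply hdmeas hS]
        congr 1
        ext x
        simp
    _ ≤ π _ := by
        rw [hπ]; exact le_add_right le_rfl
end

section
/- Let S be a measurable space and P a Markov kernel on S. Suppose there exist k ≥ 1 and p₀ > 0 such that for any two initial states there is a coupling of the two chains with ℙ[X_k = X̃_k] ≥ p₀. Then for any two initial distributions μ, ν and every n ≥ 1, the total variation distance between μP^{kn} and νP^{kn} is at most (1 − p₀)^n. -/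
open MeasureTheory ProbabilityTheory

/-- The law at time `n` of a Markov chain with transition kernel `P` started from `μ`. -/
noncomputable def stepMeasure {α : Type*} [MeasurableSpace α]
    (P : Kernel α α) (μ : Measure α) : ℕ → Measure α
  | 0 => μ
  | n + 1 => (stepMeasure P μ n).bind P

section Aux

variable {α : Type*} [MeasurableSpace α]

/-- `n`-fold composition power of a kernel. -/
noncomputable def kpow (P : Kernel α α) : ℕ → Kernel α α
  | 0 => Kernel.id
  | n + 1 => P ∘ₖ kpow P n

instance kpow_isMarkov (P : Kernel α α) [IsMarkovKernel P] (n : ℕ) :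
    IsMarkovKernel (kpow P n) := by
  induction n with
  | zero => rw [kpow]; infer_instance
  | succ n ih => rw [kpow]; infer_instance

lemma stepMeasure_eq_bind (P : Kernel α α) (μ : Measure α) :
    ∀ n, stepMeasure P μ n = μ.bind (kpow P n)
  | 0 => by
      rw [stepMeasure, kpow]
      have : (fun x => Kernel.id x) = (Measure.dirac : α → Measure α) := by
        funext x; exact Kernel.id_apply x
      show μ = μ.bind fun x => Kernel.id x
      rw [this, Measure.bind_dirac]
  | n + 1 => by
      rw [stepMeasure, stepMeasure_eq_bind P μ n,
        Measure.bind_bind (kpow P n).measurable.aemeasurable P.measurable.aemeasurable]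
      have heq : (fun a => ((kpow P n) a).bind P) = fun a => (kpow P (n + 1)) a := by
        funext a; rw [kpow, Kernel.comp_apply]
      rw [heq]

lemma stepMeasure_dirac (P : Kernel α α) (x : α) (n : ℕ) :
    stepMeasure P (Measure.dirac x) n = kpow P n x := by
  rw [stepMeasure_eq_bind, Measure.dirac_bind (kpow P n).measurable]

lemma stepMeasure_add (P : Kernel α α) (μ : Measure α) (a b : ℕ) :
    stepMeasure P μ (a + b) = stepMeasure P (stepMeasure P μ b) a := by
  induction a with
  | zero => simp [stepMeasure]
  | succ a ih =>
      have : a + 1 + b = (a + b) + 1 := by omega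
      rw [this, stepMeasure, ih, stepMeasure]

lemma kpow_add_apply (P : Kernel α α) (x : α) (a b : ℕ) :
    kpow P (a + b) x = (kpow P b x).bind (kpow P a) := by
  rw [← stepMeasure_dirac, stepMeasure_add, stepMeasure_dirac,
    stepMeasure_eq_bind]

end Aux

/-- Geometric total variation bound: under a uniform `k`-step coupling condition with
success probability `p₀`, the time-`kn` laws from any two initial distributions are
within total variation distance `(1 - p₀)^n`. -/
theorem tv_bound_of_uniform_coupling
    {α : Type*} [MeasurableSpace α] (P : Kernel α α) [IsMarkovKernel P]
    (k : ℕ) (hk : 1 ≤ k) (p₀ : ℝ) (hp₀ : 0 < p₀)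
    (hcouple : ∀ x y : α, ∃ π : Measure (α × α), IsProbabilityMeasure π ∧
      π.map Prod.fst = stepMeasure P (Measure.dirac x) k ∧
      π.map Prod.snd = stepMeasure P (Measure.dirac y) k ∧
      ENNReal.ofReal p₀ ≤ π {z : α × α | z.1 = z.2}) :
    ∀ μ ν : Measure α, IsProbabilityMeasure μ → IsProbabilityMeasure ν →
      ∀ n : ℕ, 1 ≤ n → ∀ B : Set α, MeasurableSet B →
        |(stepMeasure P μ (k * n) B).toReal - (stepMeasure P ν (k * n) B).toReal|
          ≤ (1 - p₀) ^ n := by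
  intro μ ν hμ hν n hn B hB
  -- α is nonempty since it carries a probability measure
  have hne : Nonempty α := by
    by_contra h
    have : (Set.univ : Set α) = ∅ := by
      simp [Set.eq_empty_iff_forall_notMem]
      intro x; exact h ⟨x⟩
    have h1 : μ Set.univ = 1 := measure_univ
    rw [this] at h1
    simp at h1
  obtain ⟨x₀⟩ := hne
  -- p₀ ≤ 1
  have hp1 : p₀ ≤ 1 := by
    obtain ⟨π, hπ, -, -, hd⟩ := hcouple x₀ x₀
    have : ENNReal.ofReal p₀ ≤ 1 := le_trans hd (prob_le_one)
    exact (ENNReal.ofReal_le_one).mp this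
  have h1p : 0 ≤ 1 - p₀ := by linarith
  -- bounds for F values
  have Fbdd : ∀ (ρ : Measure α) [IsProbabilityMeasure ρ] (s : Set α),
      (ρ s).toReal ≤ 1 ∧ 0 ≤ (ρ s).toReal := by
    intro ρ hρ s
    constructor
    · have := prob_le_one (μ := ρ) (s := s)
      exact ENNReal.toReal_mono (by simp) this |>.trans (by simp)
    · exact ENNReal.toReal_nonneg
  -- key pointwise estimate for dirac starting points
  have key : ∀ m : ℕ, ∀ x y : α,
      |((kpow P (k * m)) x B).toReal - ((kpow P (k * m)) y B).toReal|
        ≤ (1 - p₀) ^ m := by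
    intro m
    induction m with
    | zero =>
        intro x y
        simp only [Nat.mul_zero, pow_zero]
        have hx := Fbdd ((kpow P 0) x) B
        have hy := Fbdd ((kpow P 0) y) B
        rw [abs_sub_le_iff]
        constructor <;> linarith [hx.1, hx.2, hy.1, hy.2]
    | succ m ih =>
        intro x y
        obtain ⟨π, hπ, hfst, hsnd, hdiag⟩ := hcouple x y
        rw [stepMeasure_dirac] at hfst hsnd
        set F : α → ℝ := fun z => ((kpow P (k * m)) z B).toReal with hF
        have hFmeas : Measurable F :=
          (ENNReal.measurable_toReal).comp ((kpow P (k * m)).measurable_coe hB)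
        have hF01 : ∀ z, 0 ≤ F z ∧ F z ≤ 1 := by
          intro z
          have := Fbdd ((kpow P (k * m)) z) B
          exact ⟨this.2, this.1⟩
        -- representation of the k*(m+1)-step law
        have hrep : ∀ w : α, ((kpow P (k * (m + 1))) w B).toReal
            = ∫ z, F z ∂((kpow P k) w) := by
          intro w
          have hmul : k * (m + 1) = k * m + k := by ring
          rw [hmul, kpow_add_apply,
            Measure.bind_apply hB (kpow P (k * m)).measurable.aemeasurable,
            ← integral_toReal
              (((kpow P (k * m)).measurable_coe hB).aemeasurable)
              (Filter.Eventually.of_forall fun z =>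
                lt_of_le_of_lt prob_le_one ENNReal.one_lt_top)]
        -- transfer to the coupling
        have hx' : ∫ z, F z ∂((kpow P k) x) = ∫ z, F z.1 ∂π := by
          rw [← hfst, integral_map measurable_fst.aemeasurable
            hFmeas.aestronglyMeasurable]
        have hy' : ∫ z, F z ∂((kpow P k) y) = ∫ z, F z.2 ∂π := by
          rw [← hsnd, integral_map measurable_snd.aemeasurable
            hFmeas.aestronglyMeasurable]
        set g : α × α → ℝ := fun z => F z.1 - F z.2 with hg
        have hgmeas : Measurable g :=
          (hFmeas.comp measurable_fst).sub (hFmeas.comp measurable_snd)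
        have hint1 : Integrable (fun z : α × α => F z.1) π := by
          refine ⟨(hFmeas.comp measurable_fst).aestronglyMeasurable, ?_⟩
          apply HasFiniteIntegral.of_bounded (C := 1)
          exact Filter.Eventually.of_forall fun z => by
            rw [Real.norm_eq_abs, abs_of_nonneg (hF01 z.1).1]; exact (hF01 z.1).2
        have hint2 : Integrable (fun z : α × α => F z.2) π := by
          refine ⟨(hFmeas.comp measurable_snd).aestronglyMeasurable, ?_⟩
          apply HasFiniteIntegral.of_bounded (C := 1)
          exact Filter.Eventually.of_forall fun z => by
            rw [Real.norm_eq_abs, abs_of_nonneg (hF01 z.2).1]; exact (hF01 z.2).2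
        have hdiff : ((kpow P (k * (m + 1))) x B).toReal
            - ((kpow P (k * (m + 1))) y B).toReal = ∫ z, g z ∂π := by
          rw [hrep x, hrep y, hx', hy', ← integral_sub hint1 hint2]
        rw [hdiff]
        -- the set where g ≠ 0
        set S : Set (α × α) := {z | g z ≠ 0} with hS
        have hSmeas : MeasurableSet S :=
          (hgmeas (measurableSet_singleton 0)).compl
        have hdiag_sub : {z : α × α | z.1 = z.2} ⊆ Sᶜ := by
          intro z hz
          simp only [hS, Set.mem_compl_iff, Set.mem_setOf_eq, not_not, hg]
          rw [hz]; ring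
        have hπS : π S ≤ ENNReal.ofReal (1 - p₀) := by
          have h1 : ENNReal.ofReal p₀ ≤ π Sᶜ :=
            le_trans hdiag (measure_mono hdiag_sub)
          have h2 : π S = 1 - π Sᶜ := by
            rw [← measure_univ (μ := π), ← measure_compl hSmeas.compl
              (measure_ne_top π _), compl_compl]
          rw [h2, ENNReal.ofReal_sub _ hp₀.le, ENNReal.ofReal_one]
          exact tsub_le_tsub_left h1 1
        have hπS' : (π S).toReal ≤ 1 - p₀ :=
          ENNReal.toReal_le_of_le_ofReal h1p hπS
        -- bound |g| by an indicator
        set c : ℝ := (1 - p₀) ^ m with hc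
        have hc0 : 0 ≤ c := pow_nonneg h1p m
        have hgle : ∀ z, |g z| ≤ S.indicator (fun _ => c) z := by
          intro z
          by_cases hz : z ∈ S
          · rw [Set.indicator_of_mem hz]
            exact ih z.1 z.2
          · rw [Set.indicator_of_notMem hz]
            simp only [hS, Set.mem_setOf_eq, not_not] at hz
            rw [hz, abs_zero]
        have hintg : Integrable g π := by
          refine ⟨hgmeas.aestronglyMeasurable, ?_⟩
          apply HasFiniteIntegral.of_bounded (C := c)
          exact Filter.Eventually.of_forall fun z => by
            rw [Real.norm_eq_abs]; exact ih z.1 z.2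
        have hind_int : Integrable (S.indicator fun _ => c) π :=
          (integrable_const c).indicator hSmeas
        calc |∫ z, g z ∂π| ≤ ∫ z, |g z| ∂π := by
              simpa [Real.norm_eq_abs] using
                norm_integral_le_integral_norm (f := g) (μ := π)
          _ ≤ ∫ z, S.indicator (fun _ => c) z ∂π := by
              exact integral_mono hintg.abs hind_int hgle
          _ = (π S).toReal • c := integral_indicator_const c hSmeas
          _ ≤ (1 - p₀) * c := by
              rw [smul_eq_mul]
              exact mul_le_mul_of_nonneg_right hπS' hc0
          _ = (1 - p₀) ^ (m + 1) := by rw [hc, pow_succ]; ring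
  -- now extend to general initial distributions μ, ν
  set F : α → ℝ := fun z => ((kpow P (k * n)) z B).toReal with hF
  have hFmeas : Measurable F :=
    (ENNReal.measurable_toReal).comp ((kpow P (k * n)).measurable_coe hB)
  have hF01 : ∀ z, 0 ≤ F z ∧ F z ≤ 1 := by
    intro z
    have := Fbdd ((kpow P (k * n)) z) B
    exact ⟨this.2, this.1⟩
  have hFint : ∀ (ρ : Measure α) [IsProbabilityMeasure ρ], Integrable F ρ := by
    intro ρ hρ
    refine ⟨hFmeas.aestronglyMeasurable, ?_⟩
    apply HasFiniteIntegral.of_bounded (C := 1)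
    exact Filter.Eventually.of_forall fun z => by
      rw [Real.norm_eq_abs, abs_of_nonneg (hF01 z).1]; exact (hF01 z).2
  have hrep : ∀ (ρ : Measure α), (stepMeasure P ρ (k * n) B).toReal = ∫ z, F z ∂ρ := by
    intro ρ
    rw [stepMeasure_eq_bind, Measure.bind_apply hB (kpow P (k * n)).measurable.aemeasurable,
      ← integral_toReal (((kpow P (k * n)).measurable_coe hB).aemeasurable)
        (Filter.Eventually.of_forall fun z =>
          lt_of_le_of_lt prob_le_one ENNReal.one_lt_top)]
  rw [hrep μ, hrep ν]
  set c : ℝ := (1 - p₀) ^ n with hc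
  have hc0 : 0 ≤ c := pow_nonneg h1p n
  have hptwise : ∀ z : α, |F z - ∫ w, F w ∂ν| ≤ c := by
    intro z
    have h1 : F z - ∫ w, F w ∂ν = ∫ w, (F z - F w) ∂ν := by
      rw [integral_sub (integrable_const (F z)) (hFint ν), integral_const]
      simp
    rw [h1]
    have := norm_integral_le_of_norm_le_const (μ := ν)
      (f := fun w => F z - F w) (C := c)
      (Filter.Eventually.of_forall fun w => by
        rw [Real.norm_eq_abs]; exact key n z w)
    simpa using this
  have h2 : ∫ z, F z ∂μ - ∫ w, F w ∂ν = ∫ z, (F z - ∫ w, F w ∂ν) ∂μ := by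
    rw [integral_sub (hFint μ) (integrable_const _), integral_const]
    simp
  rw [h2]
  have := norm_integral_le_of_norm_le_const (μ := μ)
    (f := fun z => F z - ∫ w, F w ∂ν) (C := c)
    (Filter.Eventually.of_forall fun z => by
      rw [Real.norm_eq_abs]; exact hptwise z)
  simpa using this
end
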